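/- Suppose a, b, c ∈ GL_n(ℂ) satisfy [a,b] = c, ac = ca, bc = cb, and c has infinite order. Then a and c cannot both be diagonalizable. -/
import Mathlib

open Matrix

/-- `M` is diagonalizable over `ℂ` if it is conjugate to a diagonal matrix. -/
def IsDiagonalizable {n : ℕ} (M : Matrix (Fin n) (Fin n) ℂ) : Prop :=
  ∃ P : GL (Fin n) ℂ, (((P : Matrix (Fin n) (Fin n) ℂ) * M * (↑P⁻¹ : Matrix (Fin n) (Fin n) ℂ))).IsDiag

private lemma aux_toSB_mul {n : ℕ} (X Y : Matrix (Fin n) (Fin n) ℂ) (p : Fin n → Prop)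
    [DecidablePred p] (hX : ∀ i j, p i → ¬ p j → X i j = 0) :
    (X * Y).toSquareBlockProp p = X.toSquareBlockProp p * Y.toSquareBlockProp p := by
  ext ⟨i, hi⟩ ⟨k, hk⟩
  simp only [toSquareBlockProp, toBlock_apply, mul_apply]
  rw [← Finset.sum_subtype (Finset.univ.filter p) (by simp) (fun j => X i j * Y j k)]
  symm
  apply Finset.sum_subset (Finset.filter_subset _ _)
  intro j _ hj
  simp only [Finset.mem_filter, Finset.mem_univ, true_and] at hj
  rw [hX i j hi hj, zero_mul]

private lemma aux_isUnit_block {n : ℕ} (X : Matrix (Fin n) (Fin n) ℂ) (hX : IsUnit X)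
    (p : Fin n → Prop) [DecidablePred p]
    (hblk : ∀ i j, ¬ p i → p j → X i j = 0) :
    IsUnit (X.toSquareBlockProp p) := by
  rw [← Matrix.mulVec_injective_iff_isUnit]
  intro x y hxy
  have key : ∀ z : {a // p a} → ℂ, X.toSquareBlockProp p *ᵥ z = 0 → z = 0 := by
    intro z hz
    set zh : Fin n → ℂ := fun j => if h : p j then z ⟨j, h⟩ else 0 with hzh
    have hXz : X *ᵥ zh = 0 := by
      funext i
      have hsum : (X *ᵥ zh) i = ∑ j : {a // p a}, X i j.1 * z j := by
        simp only [mulVec, dotProduct]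
        calc ∑ x : Fin n, X i x * zh x
            = ∑ j ∈ Finset.univ.filter p, X i j * zh j := by
              symm
              apply Finset.sum_subset (Finset.filter_subset _ _)
              intro j _ hj
              simp only [Finset.mem_filter, Finset.mem_univ, true_and] at hj
              simp [hzh, hj]
          _ = ∑ j : {a // p a}, X i j.1 * zh j.1 :=
              Finset.sum_subtype (Finset.univ.filter p) (by simp) (fun j => X i j * zh j)
          _ = ∑ j : {a // p a}, X i j.1 * z j := by
              apply Finset.sum_congr rfl
              intro j _
              rw [hzh]
              simp [j.2]
      by_cases hi : p i
      · have := congrFun hz ⟨i, hi⟩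
        simp only [mulVec, dotProduct, toSquareBlockProp, toBlock_apply] at this
        simp only [Pi.zero_apply]
        rw [hsum]
        simpa using this
      · simp only [Pi.zero_apply, hsum]
        exact Finset.sum_eq_zero fun j _ => by rw [hblk i j hi j.2, zero_mul]
    have hinj := Matrix.mulVec_injective_iff_isUnit.mpr hX
    have : zh = 0 := hinj (by rw [hXz, Matrix.mulVec_zero])
    funext j
    have := congrFun this j.1
    simpa [hzh, j.2] using this
  have h1 : X.toSquareBlockProp p *ᵥ (x - y) = 0 := by
    rw [Matrix.mulVec_sub, hxy, sub_self]
  have := key _ h1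
  exact sub_eq_zero.mp this

private lemma aux_root_of_unity {n : ℕ} (A B : Matrix (Fin n) (Fin n) ℂ)
    (hA : IsUnit A) (hB : IsUnit B) (d : Fin n → ℂ)
    (hAB : A * B = diagonal d * (B * A))
    (hAd : A * diagonal d = diagonal d * A)
    (hBd : B * diagonal d = diagonal d * B)
    (i : Fin n) : d i ^ n.factorial = 1 := by
  classical
  have hblkA : ∀ j k, d j ≠ d k → A j k = 0 := by
    intro j k hjk
    have := congrFun (congrFun hAd j) k
    rw [Matrix.mul_diagonal, Matrix.diagonal_mul] at this
    by_contra h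
    exact hjk (mul_left_cancel₀ h (by rw [mul_comm] at this ⊢; linear_combination this)).symm
  have hblkB : ∀ j k, d j ≠ d k → B j k = 0 := by
    intro j k hjk
    have := congrFun (congrFun hBd j) k
    rw [Matrix.mul_diagonal, Matrix.diagonal_mul] at this
    by_contra h
    exact hjk (mul_left_cancel₀ h (by rw [mul_comm] at this ⊢; linear_combination this)).symm
  set p : Fin n → Prop := fun j => d j = d i with hp
  have hpA : ∀ j k, p j → ¬ p k → A j k = 0 := fun j k hj hk =>
    hblkA j k (by rw [hp] at hj hk; rw [hj]; exact fun h => hk h.symm)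
  have hpB : ∀ j k, p j → ¬ p k → B j k = 0 := fun j k hj hk =>
    hblkB j k (by rw [hp] at hj hk; rw [hj]; exact fun h => hk h.symm)
  have hpA' : ∀ j k, ¬ p j → p k → A j k = 0 := fun j k hj hk =>
    hblkA j k (by rw [hp] at hj hk; rw [hk]; exact hj)
  have hpB' : ∀ j k, ¬ p j → p k → B j k = 0 := fun j k hj hk =>
    hblkB j k (by rw [hp] at hj hk; rw [hk]; exact hj)
  have hpD : ∀ j k, p j → ¬ p k → diagonal d j k = 0 := fun j k _ hk =>
    Matrix.diagonal_apply_ne d (fun h => hk (h ▸ ‹p j›))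
  -- the diagonal block is a scalar matrix
  have hDblock : (diagonal d).toSquareBlockProp p = diagonal (fun _ : {a // p a} => d i) := by
    ext ⟨j, hj⟩ ⟨k, hk⟩
    simp only [toSquareBlockProp, toBlock_apply]
    by_cases h : (⟨j, hj⟩ : {a // p a}) = ⟨k, hk⟩
    · have : j = k := congrArg Subtype.val h
      subst this
      rw [Matrix.diagonal_apply_eq, Matrix.diagonal_apply_eq]
      exact hj
    · have hjk : j ≠ k := fun e => h (Subtype.ext e)
      rw [Matrix.diagonal_apply_ne d hjk, Matrix.diagonal_apply_ne _ h]
  have hdet : (A.toSquareBlockProp p).det * (B.toSquareBlockProp p).det =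
      d i ^ Fintype.card {a // p a} *
        ((B.toSquareBlockProp p).det * (A.toSquareBlockProp p).det) := by
    have e1 : (A * B).toSquareBlockProp p =
        A.toSquareBlockProp p * B.toSquareBlockProp p := aux_toSB_mul A B p hpA
    have e2 : (diagonal d * (B * A)).toSquareBlockProp p =
        (diagonal d).toSquareBlockProp p *
          (B.toSquareBlockProp p * A.toSquareBlockProp p) := by
      rw [aux_toSB_mul _ _ p hpD, aux_toSB_mul B A p hpB]
    have e3 : A.toSquareBlockProp p * B.toSquareBlockProp p =
        (diagonal d).toSquareBlockProp p *
          (B.toSquareBlockProp p * A.toSquareBlockProp p) := by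
      rw [← e1, hAB, e2]
    have e4 := congrArg Matrix.det e3
    rw [hDblock] at e4
    simp only [Matrix.det_mul, Matrix.det_diagonal, Finset.prod_const,
      Finset.card_univ] at e4
    exact e4.trans (by ring)
  have hdA : (A.toSquareBlockProp p).det ≠ 0 :=
    (Matrix.isUnit_iff_isUnit_det _).mp (aux_isUnit_block A hA p hpA') |>.ne_zero
  have hdB : (B.toSquareBlockProp p).det ≠ 0 :=
    (Matrix.isUnit_iff_isUnit_det _).mp (aux_isUnit_block B hB p hpB') |>.ne_zero
  have hk1 : d i ^ Fintype.card {a // p a} = 1 := by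
    have h := hdet
    rw [mul_comm ((B.toSquareBlockProp p).det) ((A.toSquareBlockProp p).det)] at h
    nth_rewrite 1 [← one_mul ((A.toSquareBlockProp p).det * (B.toSquareBlockProp p).det)] at h
    exact (mul_right_cancel₀ (mul_ne_zero hdA hdB) h).symm
  have hcard_pos : 0 < Fintype.card {a // p a} :=
    Fintype.card_pos_iff.mpr ⟨⟨i, rfl⟩⟩
  have hcard_le : Fintype.card {a // p a} ≤ n := by
    simpa using Fintype.card_subtype_le p
  obtain ⟨m, hm⟩ := Nat.dvd_factorial hcard_pos hcard_le
  rw [hm, pow_mul, hk1, one_pow]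

/-- If `a, b, c ∈ GL_n(ℂ)` satisfy `[a,b] = c`, `ac = ca`, `bc = cb`, and `c` has infinite
order, then `a` and `c` cannot both be diagonalizable. -/
theorem not_both_diagonalizable {n : ℕ} (a b c : GL (Fin n) ℂ)
    (hc : c = a * b * a⁻¹ * b⁻¹) (hac : a * c = c * a) (hbc : b * c = c * b)
    (hord : ¬ IsOfFinOrder c) :
    ¬ (IsDiagonalizable (a : Matrix (Fin n) (Fin n) ℂ) ∧
        IsDiagonalizable (c : Matrix (Fin n) (Fin n) ℂ)) := by
  rintro ⟨-, P, hP⟩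
  set a' : GL (Fin n) ℂ := P * a * P⁻¹ with ha'
  set b' : GL (Fin n) ℂ := P * b * P⁻¹ with hb'
  set c' : GL (Fin n) ℂ := P * c * P⁻¹ with hc'
  have hCmat : (c' : Matrix (Fin n) (Fin n) ℂ) =
      (P : Matrix (Fin n) (Fin n) ℂ) * c * (↑P⁻¹ : Matrix (Fin n) (Fin n) ℂ) := by
    rw [hc']; push_cast; rfl
  have hCdiag : (c' : Matrix (Fin n) (Fin n) ℂ).IsDiag := hCmat ▸ hP
  set d : Fin n → ℂ := Matrix.diag (c' : Matrix (Fin n) (Fin n) ℂ) with hd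
  have hCd : (c' : Matrix (Fin n) (Fin n) ℂ) = diagonal d := (hCdiag.diagonal_diag).symm
  -- group relations
  have hrel : a' * b' = c' * (b' * a') := by
    rw [ha', hb', hc', hc]
    group
  have hac' : a' * c' = c' * a' := by
    rw [ha', hc']
    calc P * a * P⁻¹ * (P * c * P⁻¹) = P * (a * c) * P⁻¹ := by group
    _ = P * (c * a) * P⁻¹ := by rw [hac]
    _ = P * c * P⁻¹ * (P * a * P⁻¹) := by group
  have hbc' : b' * c' = c' * b' := by
    rw [hb', hc']
    calc P * b * P⁻¹ * (P * c * P⁻¹) = P * (b * c) * P⁻¹ := by group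
    _ = P * (c * b) * P⁻¹ := by rw [hbc]
    _ = P * c * P⁻¹ * (P * b * P⁻¹) := by group
  -- matrix relations
  have hrelM : (a' : Matrix (Fin n) (Fin n) ℂ) * (b' : Matrix (Fin n) (Fin n) ℂ) =
      diagonal d * ((b' : Matrix (Fin n) (Fin n) ℂ) * (a' : Matrix (Fin n) (Fin n) ℂ)) := by
    rw [← hCd, ← Units.val_mul, ← Units.val_mul, ← Units.val_mul, hrel]
  have hacM : (a' : Matrix (Fin n) (Fin n) ℂ) * diagonal d =
      diagonal d * (a' : Matrix (Fin n) (Fin n) ℂ) := by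
    rw [← hCd, ← Units.val_mul, ← Units.val_mul, hac']
  have hbcM : (b' : Matrix (Fin n) (Fin n) ℂ) * diagonal d =
      diagonal d * (b' : Matrix (Fin n) (Fin n) ℂ) := by
    rw [← hCd, ← Units.val_mul, ← Units.val_mul, hbc']
  have hroot : ∀ i, d i ^ n.factorial = 1 :=
    aux_root_of_unity _ _ a'.isUnit b'.isUnit d hrelM hacM hbcM
  -- c' has finite order
  have hcpow : c' ^ n.factorial = 1 := by
    apply Units.ext
    push_cast
    rw [hCd, Matrix.diagonal_pow]
    convert Matrix.diagonal_one using 2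
    funext i
    exact hroot i
  have hcfin : c ^ n.factorial = 1 := by
    have : c = P⁻¹ * c' * P := by rw [hc']; group
    rw [this]
    have hconj : (P⁻¹ * c' * P) ^ n.factorial = P⁻¹ * c' ^ n.factorial * P := by
      have := conj_pow (a := P⁻¹) (b := c') (i := n.factorial)
      simpa using this
    rw [hconj, hcpow]
    group
  exact hord (isOfFinOrder_iff_pow_eq_one.mpr ⟨n.factorial, n.factorial_pos, hcfin⟩)
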